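/- If T ∈ B(X) has Bishop's property (β), K ∈ B(X) is algebraic with TK = KT, and f is a scalar-valued analytic function on a neighborhood of σ(T + K), then f(T + K) has Bishop's property (β). -/

import Mathlib

open Filter Metric Polynomial

noncomputable section

variable {X : Type*} [NormedAddCommGroup X] [NormedSpace ℂ X]

/-- The commutator map `C(R,S)(A) = RA - AS`. -/
def commMap (R S : X →L[ℂ] X) : (X →L[ℂ] X) → (X →L[ℂ] X) := fun A => R ∘L A - A ∘L S

/-- Bishop's property (β) at a point `l0`. -/
def BishopBetaAt (T : X →L[ℂ] X) (l0 : ℂ) : Prop :=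
  ∃ v > (0 : ℝ), ∀ U : Set ℂ, IsOpen U → U ⊆ ball l0 v →
    ∀ f : ℕ → ℂ → X, (∀ n, AnalyticOnNhd ℂ (f n) U) →
      (∀ K ⊆ U, IsCompact K →
        TendstoUniformlyOn (fun n z => T (f n z) - z • f n z) 0 atTop K) →
      ∀ K ⊆ U, IsCompact K → TendstoUniformlyOn (fun n z => f n z) 0 atTop K

/-- Uniform convergence to zero of an identically-zero family. -/
lemma tuoZero {s : Set ℂ} {F : ℕ → ℂ → X} (h : ∀ n, ∀ z ∈ s, F n z = 0) :
    TendstoUniformlyOn F 0 atTop s := by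
  rw [Metric.tendstoUniformlyOn_iff]
  intro ε hε
  filter_upwards with n z hz
  simp [h n z hz, hε]

/-- Post-composition with a continuous linear map preserves uniform convergence to zero. -/
lemma tuoClm (A : X →L[ℂ] X) {s : Set ℂ} {F : ℕ → ℂ → X}
    (h : TendstoUniformlyOn F 0 atTop s) :
    TendstoUniformlyOn (fun n z => A (F n z)) 0 atTop s := by
  rw [Metric.tendstoUniformlyOn_iff] at h ⊢
  intro ε hε
  have hApos : (0:ℝ) < ‖A‖ + 1 := by positivity
  filter_upwards [h (ε / (‖A‖ + 1)) (by positivity)] with n hn z hz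
  have h1 := hn z hz
  simp only [Pi.zero_apply, dist_zero_left] at h1 ⊢
  have h2 : ‖F n z‖ * (‖A‖ + 1) < ε := by
    rw [← lt_div_iff₀ hApos]; exact h1
  calc ‖A (F n z)‖ ≤ ‖A‖ * ‖F n z‖ := A.le_opNorm _
    _ < ε := by nlinarith [norm_nonneg A, norm_nonneg (F n z)]

/-- Difference of two families converging uniformly to zero converges uniformly to zero. -/
lemma tuoSub {s : Set ℂ} {F G : ℕ → ℂ → X}
    (hF : TendstoUniformlyOn F 0 atTop s) (hG : TendstoUniformlyOn G 0 atTop s) :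
    TendstoUniformlyOn (fun n z => F n z - G n z) 0 atTop s := by
  rw [Metric.tendstoUniformlyOn_iff] at hF hG ⊢
  intro ε hε
  filter_upwards [hF (ε / 2) (by positivity), hG (ε / 2) (by positivity)] with n h1 h2 z hz
  have e1 := h1 z hz
  have e2 := h2 z hz
  simp only [Pi.zero_apply, dist_zero_left] at e1 e2 ⊢
  calc ‖F n z - G n z‖ ≤ ‖F n z‖ + ‖G n z‖ := norm_sub_le _ _
    _ < ε := by linarith

/-- Pre-composition preserves uniform convergence to zero. -/
lemma tuoComp {s : Set ℂ} {F : ℕ → ℂ → X}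
    (h : TendstoUniformlyOn F 0 atTop s) (g : ℂ → ℂ) :
    TendstoUniformlyOn (fun n w => F n (g w)) 0 atTop (g ⁻¹' s) := by
  rw [Metric.tendstoUniformlyOn_iff] at h ⊢
  intro ε hε
  filter_upwards [h ε hε] with n hn w hw
  exact hn (g w) hw

lemma foldrMinPos : ∀ l : List ℝ, (∀ x ∈ l, 0 < x) → 0 < l.foldr min 1
  | [], _ => one_pos
  | a :: l, h => by
      simp only [List.foldr_cons, lt_min_iff]
      exact ⟨h a (List.mem_cons_self (a := a) (l := l)),
        foldrMinPos l fun x hx => h x (List.mem_cons_of_mem a hx)⟩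

lemma foldrMinLe : ∀ (l : List ℝ) (x : ℝ), x ∈ l → l.foldr min 1 ≤ x
  | [], x, h => absurd h (List.not_mem_nil (a := x))
  | a :: l, x, h => by
      simp only [List.foldr_cons]
      rcases List.mem_cons.mp h with rfl | h
      · exact min_le_left _ _
      · exact le_trans (min_le_right _ _) (foldrMinLe l x h)

/-- The key lemma: if `T` has Bishop's property (β) everywhere and `Kop` commutes with `T`
and a product of factors `Kop - a • 1` vanishes, then `T + Kop` has (β) everywhere. -/
lemma keyBeta [CompleteSpace X] (T Kop : X →L[ℂ] X) (hc : T * Kop = Kop * T)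
    (hT : ∀ l : ℂ, BishopBetaAt T l) (L : List ℂ)
    (hL : (L.map fun a => Kop - a • (1 : X →L[ℂ] X)).prod = 0) (l0 : ℂ) :
    BishopBetaAt (T + Kop) l0 := by
  classical
  choose vf hvf1 hvf2 using fun a : ℂ => hT (l0 - a)
  set v : ℝ := (L.map vf).foldr min 1 with hvdef
  have hv0 : 0 < v := by
    apply foldrMinPos
    intro x hx
    obtain ⟨a, _, rfl⟩ := List.mem_map.mp hx
    exact hvf1 a
  refine ⟨v, hv0, ?_⟩
  intro U hU hUb f hf hconv
  suffices h : ∀ L' : List ℂ, (∀ μ ∈ L', μ ∈ L) →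
      (∀ C ⊆ U, IsCompact C →
        TendstoUniformlyOn
          (fun n z => ((L'.map fun a => Kop - a • (1 : X →L[ℂ] X)).prod) (f n z)) 0 atTop C) →
      ∀ C ⊆ U, IsCompact C → TendstoUniformlyOn (fun n z => f n z) 0 atTop C by
    apply h L (fun μ hμ => hμ)
    intro C _ _
    apply tuoZero
    intro n z _
    rw [hL]
    rfl
  intro L'
  induction L' with
  | nil =>
      intro _ h0 C hC hCc
      have := h0 C hC hCc
      simpa using this
  | cons a L'' ih =>
      intro hsub hconv'
      set Q : X →L[ℂ] X := (L''.map fun b => Kop - b • (1 : X →L[ℂ] X)).prod with hQdef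
      have hcK : Commute T Kop := hc
      have hfac : ∀ b : ℂ, Commute T (Kop - b • (1 : X →L[ℂ] X)) := fun b =>
        hcK.sub_right ((Commute.one_right T).smul_right b)
      have hfacK : ∀ b : ℂ, Commute Kop (Kop - b • (1 : X →L[ℂ] X)) := fun b =>
        (Commute.refl Kop).sub_right ((Commute.one_right Kop).smul_right b)
      have hcommT : Commute T Q := by
        apply Commute.list_prod_right
        intro x hx
        obtain ⟨b, _, rfl⟩ := List.mem_map.mp hx
        exact hfac b
      have hcommK : Commute Kop Q := by
        apply Commute.list_prod_right
        intro x hx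
        obtain ⟨b, _, rfl⟩ := List.mem_map.mp hx
        exact hfacK b
      set g : ℕ → ℂ → X := fun n z => Q (f n z) with hgdef
      -- key pointwise identity
      have hpt : ∀ n z, T (g n z) - (z - a) • g n z =
          Q ((T + Kop) (f n z) - z • f n z)
            - ((Kop - a • (1 : X →L[ℂ] X)) * Q) (f n z) := by
        intro n z
        set x := f n z
        have e1 : T (Q x) = Q (T x) := by
          have := congrArg (fun A : X →L[ℂ] X => A x) hcommT.eq
          simpa [ContinuousLinearMap.mul_apply] using this
        have e2 : Kop (Q x) = Q (Kop x) := by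
          have := congrArg (fun A : X →L[ℂ] X => A x) hcommK.eq
          simpa [ContinuousLinearMap.mul_apply] using this
        simp only [hgdef, ContinuousLinearMap.mul_apply, ContinuousLinearMap.sub_apply,
          ContinuousLinearMap.smul_apply, ContinuousLinearMap.one_apply,
          ContinuousLinearMap.add_apply, map_sub, map_add, map_smul, sub_smul]
        rw [e1, e2]
        abel
      -- convergence of the shifted resolvent expression for g
      have hg : ∀ C ⊆ U, IsCompact C →
          TendstoUniformlyOn (fun n z => T (g n z) - (z - a) • g n z) 0 atTop C := by
        intro C hC hCc
        have h1 := tuoClm Q (hconv C hC hCc)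
        have h2 := hconv' C hC hCc
        have h2' : TendstoUniformlyOn
            (fun n z => ((Kop - a • (1 : X →L[ℂ] X)) * Q) (f n z)) 0 atTop C := by
          simpa [List.map_cons, List.prod_cons] using h2
        have := tuoSub h1 h2'
        apply this.congr
        filter_upwards with n z hz
        exact (hpt n z).symm
      -- apply Bishop's property of T at l0 - a
      have haL : a ∈ L := hsub a (List.mem_cons_self (a := a) (l := L''))
      have hva : v ≤ vf a := foldrMinLe _ _ (List.mem_map.mpr ⟨a, haL, rfl⟩)
      set U' : Set ℂ := (fun w => w + a) ⁻¹' U with hU'def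
      have hU'open : IsOpen U' := hU.preimage (continuous_id.add continuous_const)
      have hU'b : U' ⊆ ball (l0 - a) (vf a) := by
        intro w hw
        have h1 : w + a ∈ ball l0 v := hUb hw
        rw [mem_ball] at h1 ⊢
        have : dist w (l0 - a) = dist (w + a) l0 := by
          simp only [Complex.dist_eq]
          ring_nf
        rw [this]
        exact lt_of_lt_of_le h1 hva
      set F : ℕ → ℂ → X := fun n w => g n (w + a) with hFdef
      have hFanal : ∀ n, AnalyticOnNhd ℂ (F n) U' := by
        intro n w hw
        have hin : AnalyticAt ℂ (fun w : ℂ => w + a) w :=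
          (analyticAt_id (𝕜 := ℂ)).add analyticAt_const
        have hfn : AnalyticAt ℂ (f n) (w + a) := hf n (w + a) hw
        exact (Q.analyticAt _).comp (AnalyticAt.comp (f := fun w : ℂ => w + a) hfn hin)
      have hFhyp : ∀ C' ⊆ U', IsCompact C' →
          TendstoUniformlyOn (fun n w => T (F n w) - w • F n w) 0 atTop C' := by
        intro C' hC' hC'c
        set C : Set ℂ := (fun w => w + a) '' C' with hCdef
        have hCU : C ⊆ U := by
          rintro z ⟨w, hw, rfl⟩
          exact hC' hw
        have hCc : IsCompact C := hC'c.image (continuous_id.add continuous_const)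
        have h1 := tuoComp (hg C hCU hCc) (fun w => w + a)
        have h2 : C' ⊆ (fun w => w + a) ⁻¹' C := fun w hw => ⟨w, hw, rfl⟩
        have h3 := h1.mono h2
        apply h3.congr
        filter_upwards with n w hw
        simp [hFdef, add_sub_cancel_right]
      have hβ := hvf2 a U' hU'open hU'b F hFanal hFhyp
      -- conclude g → 0 on compacts of U
      have hgU : ∀ C ⊆ U, IsCompact C →
          TendstoUniformlyOn (fun n z => g n z) 0 atTop C := by
        intro C hC hCc
        set C' : Set ℂ := (fun z => z - a) '' C with hC'def
        have hC'U : C' ⊆ U' := by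
          rintro w ⟨z, hz, rfl⟩
          show z - a + a ∈ U
          simpa [sub_add_cancel] using hC hz
        have hC'c : IsCompact C' := hCc.image (continuous_id.sub continuous_const)
        have h1 := tuoComp (hβ C' hC'U hC'c) (fun z => z - a)
        have h2 : C ⊆ (fun z => z - a) ⁻¹' C' := fun z hz => ⟨z, hz, rfl⟩
        have h3 := h1.mono h2
        apply h3.congr
        filter_upwards with n z hz
        simp [hFdef, sub_add_cancel]
      exact ih (fun μ hμ => hsub μ (List.mem_cons_of_mem a hμ)) hgU

theorem stmt17 [CompleteSpace X] (T K : X →L[ℂ] X) (p : Polynomial ℂ) (f : ℂ → ℂ)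
    (Φ : (X →L[ℂ] X) → (ℂ → ℂ) → (X →L[ℂ] X))
    (hT : ∀ l : ℂ, BishopBetaAt T l) (hp : p ≠ 0) (hpK : aeval K p = 0)
    (hcomm : T * K = K * T)
    (hf : AnalyticOnNhd ℂ f (spectrum ℂ (T + K)))
    (hΦ : ∀ (S : X →L[ℂ] X) (g : ℂ → ℂ), AnalyticOnNhd ℂ g (spectrum ℂ S) →
      (∀ l : ℂ, BishopBetaAt S l) → ∀ l : ℂ, BishopBetaAt (Φ S g) l) :
    ∀ l : ℂ, BishopBetaAt (Φ (T + K) f) l := by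
  apply hΦ (T + K) f hf
  intro l
  -- obtain a list of roots
  obtain ⟨L, hLrep⟩ := Quot.exists_rep p.roots
  have hLcoe : (↑L : Multiset ℂ) = p.roots := hLrep
  apply keyBeta T K hcomm hT L ?_ l
  -- the product of the factors vanishes
  have hsplit : p = C p.leadingCoeff * (p.roots.map fun a => Polynomial.X - C a).prod :=
    (IsAlgClosed.splits p).eq_prod_roots
  rw [← hLcoe, Multiset.map_coe, Multiset.prod_coe] at hsplit
  have h0 : (0 : X →L[ℂ] X) = aeval K p := hpK.symm
  rw [hsplit, map_mul, aeval_C, map_list_prod, List.map_map] at h0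
  have h1 : (L.map (⇑(aeval K) ∘ fun a => Polynomial.X - C a)) =
      L.map fun a => K - a • (1 : X →L[ℂ] X) := by
    apply List.map_congr_left
    intro a _
    simp [Function.comp, map_sub, aeval_X, aeval_C, Algebra.algebraMap_eq_smul_one]
  rw [h1, Algebra.algebraMap_eq_smul_one, smul_mul_assoc, one_mul] at h0
  have hlc : p.leadingCoeff ≠ 0 := leadingCoeff_ne_zero.mpr hp
  rcases smul_eq_zero.mp h0.symm with h | h
  · exact absurd h hlc
  · exact h
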